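/- Let G act properly by isometries on a proper geodesic metric space X with base point o, and let ν = (ν_x) be an ω-conformal density on X̄. Then for every g ∈ G and r ≥ 0, the shadow O_o(go, r) satisfies ν_o(O_o(go, r)) ≤ e^{2ωr} ‖ν_{go}‖ e^{−ω d(o, go)}. -/

import Mathlib

open Metric Set MeasureTheory

variable {X : Type*} [MetricSpace X]

/-- A map `γ` is a geodesic on the parameter set `s`. -/
def IsGeodesicOn (γ : ℝ → X) (s : Set ℝ) : Prop :=
  ∀ t ∈ s, ∀ t' ∈ s, dist (γ t) (γ t') = |t - t'|

/-- The set of nearest-point projections of points of `Z` onto `Y`. -/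
def projSet (Y Z : Set X) : Set X :=
  {y | y ∈ Y ∧ ∃ z ∈ Z, dist z y = Metric.infDist z Y}

/-- `Y` is an `α`-contracting closed subset: any geodesic at distance `≥ α` from `Y`
has projection onto `Y` of diameter `≤ α`. -/
def IsContractingSet (α : ℝ) (Y : Set X) : Prop :=
  IsClosed Y ∧ ∀ (γ : ℝ → X) (s : Set ℝ), IsGeodesicOn γ s →
    (∀ t ∈ s, α ≤ Metric.infDist (γ t) Y) →
    Metric.diam (projSet Y (γ '' s)) ≤ α

/-- `X` is a geodesic space: any two points are joined by a geodesic. -/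
def GeodesicSpace (X : Type*) [MetricSpace X] : Prop :=
  ∀ x y : X, ∃ γ : ℝ → X, γ 0 = x ∧ γ (dist x y) = y ∧
    IsGeodesicOn γ (Set.Icc 0 (dist x y))

/-- The Busemann cocycle associated to the point `z`. -/
def busemann (z : X) : X → X → ℝ := fun x y => dist x z - dist y z

/-- The horocompactification of `X`: the closure of the set of Busemann cocycles. -/
def horocompactification (X : Type*) [MetricSpace X] : Set (X → X → ℝ) :=
  closure (Set.range (busemann (X := X)))

/-- The horoboundary of `X`. -/
def horoboundary (X : Type*) [MetricSpace X] : Set (X → X → ℝ) :=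
  horocompactification X \ Set.range (busemann (X := X))

/-- The Gromov product of `x ∈ X` and a cocycle `c` based at `y`. -/
noncomputable def gromovProduct (x : X) (c : X → X → ℝ) (y : X) : ℝ := (dist x y + c y x) / 2

/-- The `r`-shadow of `y` seen from `x`. -/
def shadow (x y : X) (r : ℝ) : Set (X → X → ℝ) :=
  {c | c ∈ horocompactification X ∧ gromovProduct x c y ≤ r}


lemma horo_antisymm {X : Type*} [MetricSpace X] {c : X → X → ℝ}
    (hc : c ∈ horocompactification X) (x y : X) : c y x = - c x y := by
  have hcont : Continuous fun f : X → X → ℝ => f y x + f x y :=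
    ((continuous_apply x).comp (continuous_apply y) : Continuous fun f : X → X → ℝ => f y x).add
      ((continuous_apply y).comp (continuous_apply x) : Continuous fun f : X → X → ℝ => f x y)
  have hclosed : IsClosed {f : X → X → ℝ | f y x + f x y = 0} :=
    isClosed_eq hcont continuous_const
  have hsub : Set.range (busemann (X := X)) ⊆ {f | f y x + f x y = 0} := by
    rintro f ⟨z, rfl⟩
    simp only [busemann, Set.mem_setOf_eq]
    ring
  have h := closure_minimal hsub hclosed hc
  simp only [Set.mem_setOf_eq] at h
  linarith

/-- Upper bound in the Shadow Lemma: for any `ω`-conformal density,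
`ν_o(O_o(go, r)) ≤ e^{2ωr} ‖ν_{go}‖ e^{-ω d(o,go)}`. -/
theorem shadow_measure_upper_bound {G : Type*} [Group G]
    [ProperSpace X] [MulAction G X]
    (hX : GeodesicSpace X) (hiso : ∀ g : G, Isometry fun x : X => g • x) (o : X)
    (hproper : ∀ r : ℝ, {g : G | dist o (g • o) ≤ r}.Finite)
    (ω : ℝ) (hω : 0 ≤ ω) (ν : X → Measure (X → X → ℝ))
    (hfin : ∀ x : X, ν x Set.univ < ⊤)
    (hsupp : ∀ x : X, ν x (horocompactification X)ᶜ = 0)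
    (hconf : ∀ x y : X, ∀ A : Set (X → X → ℝ), MeasurableSet A →
      ν x A = ∫⁻ c in A, ENNReal.ofReal (Real.exp (-ω * c x y)) ∂(ν y))
    (g : G) (r : ℝ) (hr : 0 ≤ r) :
    ν o (shadow o (g • o) r) ≤
      ENNReal.ofReal (Real.exp (2 * ω * r)) * ν (g • o) Set.univ *
        ENNReal.ofReal (Real.exp (-ω * dist o (g • o))) := by
  set d := dist o (g • o) with hd
  set M : Set (X → X → ℝ) := (fun c : X → X → ℝ => c o (g • o)) ⁻¹' Set.Ici (d - 2*r) with hM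
  have hmeas : Measurable fun c : X → X → ℝ => c o (g • o) :=
    (measurable_pi_apply (g • o)).comp (measurable_pi_apply o)
  have hMmeas : MeasurableSet M := hmeas measurableSet_Ici
  have hsubset : shadow o (g • o) r ⊆ M := by
    rintro c ⟨hch, hgp⟩
    have hanti : c (g • o) o = - c o (g • o) := horo_antisymm hch o (g • o)
    simp only [gromovProduct] at hgp
    simp only [hM, Set.mem_preimage, Set.mem_Ici]
    rw [hanti] at hgp
    linarith
  have h1 : ν o (shadow o (g • o) r) ≤ ν o M := measure_mono hsubset
  have h2 : ν o M = ∫⁻ c in M, ENNReal.ofReal (Real.exp (-ω * c o (g • o))) ∂(ν (g • o)) :=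
    hconf o (g • o) M hMmeas
  set C : ENNReal := ENNReal.ofReal (Real.exp (2*ω*r - ω*d)) with hC
  have h3 : ∫⁻ c in M, ENNReal.ofReal (Real.exp (-ω * c o (g • o))) ∂(ν (g • o)) ≤
      ∫⁻ _ in M, C ∂(ν (g • o)) := by
    refine setLIntegral_mono measurable_const (fun c hc => ?_)
    have hcge : d - 2*r ≤ c o (g • o) := hc
    refine ENNReal.ofReal_le_ofReal (Real.exp_le_exp.mpr ?_)
    nlinarith
  have h4 : ∫⁻ _ in M, C ∂(ν (g • o)) = C * ν (g • o) M := setLIntegral_const M C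
  have h5 : C * ν (g • o) M ≤ C * ν (g • o) Set.univ :=
    mul_le_mul_right (measure_mono (Set.subset_univ M)) C
  have hCfact : C = ENNReal.ofReal (Real.exp (2 * ω * r)) * ENNReal.ofReal (Real.exp (-ω * d)) := by
    rw [hC, ← ENNReal.ofReal_mul (Real.exp_nonneg _), ← Real.exp_add]
    ring_nf
  calc ν o (shadow o (g • o) r) ≤ C * ν (g • o) Set.univ := by
        rw [h2] at h1; exact h1.trans (h3.trans (h4 ▸ h5))
    _ = ENNReal.ofReal (Real.exp (2 * ω * r)) * ν (g • o) Set.univ *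
        ENNReal.ofReal (Real.exp (-ω * dist o (g • o))) := by
        rw [hCfact, ← hd]; ring
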